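/- Let $d \geq 2$, $i \in \mathbb{Z}_{\geq 0}$, and let $h(a) = \theta_{d-1}\int_0^a (1-y^2)^{(d-1)/2}\,dy$ for $a \in [0,1]$. Fix $\varepsilon \in (0,1)$ and set $\delta = \varepsilon/(4+i)$. Then as $s \to \infty$, $$\theta_{d-1}\int_0^{s^{\delta-1}} e^{-s h(a)} h(a)^{i}\, da = i!\, s^{-i-1} + O(s^{\varepsilon - i - 3}).$$ -/

import Mathlib

open MeasureTheory Metric Set Real

/-- θ_n, the Lebesgue volume of the unit Euclidean ball in ℝ^n. -/
noncomputable def ubv (n : ℕ) : ℝ :=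
  (volume (Metric.ball (0 : EuclideanSpace ℝ (Fin n)) 1)).toReal

/-- The slab-volume function `h(a) = θ_{d-1} ∫_0^a (1-y²)^{(d-1)/2} dy`. -/
noncomputable def hSlab (d : ℕ) (a : ℝ) : ℝ :=
  ubv (d-1) * ∫ y in (0:ℝ)..a, (1 - y^2) ^ (((d:ℝ) - 1)/2)

open Filter


lemma Fint (i : ℕ) : IntegrableOn (fun w : ℝ => Real.exp (-w) * w^i) (Ioi 0) := by
  have h := Real.GammaIntegral_convergent (s := (i:ℝ) + 1) (by positivity)
  refine h.congr_fun (fun x hx => ?_) measurableSet_Ioi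
  rw [add_sub_cancel_right]; simp only [Real.rpow_natCast]

lemma Ftot (i : ℕ) : ∫ w in Ioi (0:ℝ), Real.exp (-w) * w^i = i.factorial := by
  have h := Real.Gamma_eq_integral (s := (i:ℝ) + 1) (by positivity)
  rw [Real.Gamma_nat_eq_factorial] at h
  rw [h]
  apply setIntegral_congr_fun measurableSet_Ioi
  intro x hx
  simp [add_sub_cancel_right, Real.rpow_natCast]

lemma pow_le_exp_half (i : ℕ) (w : ℝ) (hw : 0 ≤ w) :
    w^i ≤ 2^i * i.factorial * Real.exp (w/2) := by
  have h1 : (w/2)^i / i.factorial ≤ Real.exp (w/2) := by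
    calc (w/2)^i / i.factorial ≤ ∑ j ∈ Finset.range (i+1), (w/2)^j / j.factorial := by
          exact Finset.single_le_sum (f := fun j => (w/2)^j / (j.factorial:ℝ))
            (fun j _ => by positivity) (Finset.self_mem_range_succ i)
      _ ≤ Real.exp (w/2) := Real.sum_le_exp_of_nonneg (by positivity) _
  have h2 : w^i = 2^i * (w/2)^i := by rw [← mul_pow]; ring_nf
  have hf : (0:ℝ) < i.factorial := by exact_mod_cast i.factorial_pos
  rw [h2]
  calc (2:ℝ)^i * (w/2)^i = 2^i * i.factorial * ((w/2)^i / i.factorial) := by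
        field_simp
    _ ≤ 2^i * i.factorial * Real.exp (w/2) := by
        apply mul_le_mul_of_nonneg_left h1 (by positivity)

lemma integral_exp_half_Ioi (T : ℝ) :
    ∫ w in Ioi T, Real.exp (-(1/2)*w) = 2 * Real.exp (-(1/2)*T) := by
  have hderiv : ∀ x ∈ Ici T, HasDerivAt (fun x : ℝ => -2 * Real.exp (-(1/2)*x))
      (Real.exp (-(1/2)*x)) x := by
    intro x _
    have := ((hasDerivAt_id x).const_mul (-(1/2):ℝ)).exp.const_mul (-2:ℝ)
    refine this.congr_deriv ?_
    simp only [id_eq]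
    ring
  have hint : IntegrableOn (fun x : ℝ => Real.exp (-(1/2)*x)) (Ioi T) := by
    have := exp_neg_integrableOn_Ioi T (b := (1/2:ℝ)) (by norm_num)
    simpa using this
  have hlim : Tendsto (fun x : ℝ => -2 * Real.exp (-(1/2)*x)) atTop (nhds 0) := by
    have : Tendsto (fun x : ℝ => Real.exp (-(1/2)*x)) atTop (nhds 0) := by
      apply Real.tendsto_exp_atBot.comp
      exact Tendsto.const_mul_atTop_of_neg (by norm_num) tendsto_id
    simpa using this.const_mul (-2:ℝ)
  have := MeasureTheory.integral_Ioi_of_hasDerivAt_of_tendsto'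
    (f' := fun x : ℝ => Real.exp (-(1/2)*x)) hderiv hint hlim
  rw [this]; ring

lemma tail_le (i : ℕ) (T : ℝ) (hT : 0 ≤ T) :
    ∫ w in Ioi T, Real.exp (-w) * w^i ≤ 2^(i+1) * i.factorial * Real.exp (-(1/2)*T) := by
  have hmono : ∀ w ∈ Ioi T, Real.exp (-w) * w^i ≤ (2^i * i.factorial) * Real.exp (-(1/2)*w) := by
    intro w hw
    have hw0 : 0 ≤ w := le_trans hT (le_of_lt hw)
    have := pow_le_exp_half i w hw0
    calc Real.exp (-w) * w^i ≤ Real.exp (-w) * (2^i * i.factorial * Real.exp (w/2)) := by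
          apply mul_le_mul_of_nonneg_left this (Real.exp_pos _).le
      _ = (2^i * i.factorial) * Real.exp (-(1/2)*w) := by
          rw [mul_comm (Real.exp (-w)), mul_assoc, ← Real.exp_add]
          ring_nf
  have hint1 : IntegrableOn (fun w : ℝ => Real.exp (-w) * w^i) (Ioi T) :=
    (Fint i).mono_set (Ioi_subset_Ioi hT)
  have hint2 : IntegrableOn (fun w : ℝ => (2^i * i.factorial) * Real.exp (-(1/2)*w)) (Ioi T) := by
    have := exp_neg_integrableOn_Ioi T (b := (1/2:ℝ)) (by norm_num)
    exact this.const_mul _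
  calc ∫ w in Ioi T, Real.exp (-w) * w^i
      ≤ ∫ w in Ioi T, (2^i * i.factorial) * Real.exp (-(1/2)*w) :=
        setIntegral_mono_on hint1 hint2 measurableSet_Ioi hmono
    _ = (2^i * i.factorial) * (2 * Real.exp (-(1/2)*T)) := by
        rw [integral_const_mul, integral_exp_half_Ioi]
    _ = 2^(i+1) * i.factorial * Real.exp (-(1/2)*T) := by ring

lemma gamma_trunc (i : ℕ) (T : ℝ) (hT : 0 ≤ T) :
    (∫ w in (0:ℝ)..T, Real.exp (-w) * w^i) ≤ i.factorial ∧
    (i.factorial : ℝ) - (∫ w in (0:ℝ)..T, Real.exp (-w) * w^i)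
      ≤ 2^(i+1) * i.factorial * Real.exp (-(1/2)*T) ∧
    0 ≤ ∫ w in (0:ℝ)..T, Real.exp (-w) * w^i := by
  have hsplit : (i.factorial : ℝ) = (∫ w in Ioc (0:ℝ) T, Real.exp (-w) * w^i)
      + ∫ w in Ioi T, Real.exp (-w) * w^i := by
    rw [← Ftot i, ← Set.Ioc_union_Ioi_eq_Ioi hT]
    rw [setIntegral_union (Set.Ioc_disjoint_Ioi le_rfl) measurableSet_Ioi
      ((Fint i).mono_set Set.Ioc_subset_Ioi_self) ((Fint i).mono_set (Ioi_subset_Ioi hT))]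
  have heq : (∫ w in (0:ℝ)..T, Real.exp (-w) * w^i) = ∫ w in Ioc (0:ℝ) T, Real.exp (-w) * w^i :=
    intervalIntegral.integral_of_le hT
  have htail0 : 0 ≤ ∫ w in Ioi T, Real.exp (-w) * w^i := by
    apply setIntegral_nonneg measurableSet_Ioi
    intro w hw
    have : 0 ≤ w := le_trans hT (le_of_lt hw)
    positivity
  have h0 : 0 ≤ ∫ w in Ioc (0:ℝ) T, Real.exp (-w) * w^i := by
    apply setIntegral_nonneg measurableSet_Ioc
    intro w hw
    have : 0 ≤ w := hw.1.le
    positivity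
  refine ⟨?_, ?_, ?_⟩
  · rw [heq]; linarith [hsplit, htail0]
  · rw [heq]; have := tail_le i T hT; linarith [hsplit]
  · rw [heq]; exact h0

lemma contg (p : ℝ) (hp : 0 ≤ p) : Continuous (fun y : ℝ => (1 - y^2) ^ p) := by
  apply Continuous.rpow_const (by continuity)
  intro x; exact Or.inr hp

lemma hasDerivAt_hSlab (d : ℕ) (hd : 2 ≤ d) (a : ℝ) :
    HasDerivAt (hSlab d) (ubv (d-1) * (1 - a^2) ^ (((d:ℝ)-1)/2)) a := by
  have hp : (0:ℝ) ≤ ((d:ℝ)-1)/2 := by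
    have : (1:ℝ) ≤ (d:ℝ) := by exact_mod_cast le_trans (by norm_num) hd
    linarith
  have hc := contg _ hp
  have h1 : HasDerivAt (fun a : ℝ => ∫ y in (0:ℝ)..a, (1 - y^2) ^ (((d:ℝ)-1)/2))
      ((1 - a^2) ^ (((d:ℝ)-1)/2)) a := by
    apply intervalIntegral.integral_hasDerivAt_right
      (hc.intervalIntegrable _ _)
      (hc.stronglyMeasurableAtFilter _ _)
      hc.continuousAt
  exact h1.const_mul (ubv (d-1))

lemma hSlab_zero (d : ℕ) : hSlab d 0 = 0 := by simp [hSlab]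

lemma ubv_pos (n : ℕ) : 0 < ubv n := by
  rw [ubv]
  apply ENNReal.toReal_pos
  · exact (measure_ball_pos volume 0 one_pos).ne'
  · exact measure_ball_lt_top.ne

lemma one_sub_rpow_le (p x : ℝ) (hp : 0 ≤ p) (hx : x ∈ Icc (0:ℝ) (1/2)) :
    1 - (1-x)^p ≤ (p+1)*x := by
  obtain ⟨hx0, hx1⟩ := hx
  rcases le_or_gt p 1 with h1 | h1
  · have hb0 : (0:ℝ) < 1 - x := by linarith
    have hb1 : 1 - x ≤ 1 := by linarith
    have : (1-x)^(1:ℝ) ≤ (1-x)^p := Real.rpow_le_rpow_of_exponent_ge hb0 hb1 h1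
    rw [Real.rpow_one] at this
    nlinarith
  · have hs : -1 ≤ -x := by linarith
    have := one_add_mul_self_le_rpow_one_add hs h1.le
    have h2 : (1 + -x) = 1 - x := by ring
    rw [h2] at this
    nlinarith

set_option maxHeartbeats 1600000 in
/-- with `δ = ε/(4+i)`, as `s → ∞`,
`θ_{d-1} ∫_0^{s^{δ-1}} e^{-s h(a)} h(a)^i da = i! s^{-i-1} + O(s^{ε-i-3})`. -/
theorem integral_exp_slab_truncated (d : ℕ) (hd : 2 ≤ d) (i : ℕ)
    (ε : ℝ) (hε : ε ∈ Set.Ioo (0:ℝ) 1) (δ : ℝ) (hδ : δ = ε / (4 + (i:ℝ))) :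
    ∃ C s₀ : ℝ, ∀ s ≥ s₀,
      |ubv (d-1) * (∫ a in (0:ℝ)..(s ^ (δ - 1)), Real.exp (-(s * hSlab d a)) * (hSlab d a)^i)
        - (Nat.factorial i : ℝ) / s^(i+1)| ≤ C * s ^ (ε - (i:ℝ) - 3) := by
  obtain ⟨hε0, hε1⟩ := hε
  set p : ℝ := ((d:ℝ)-1)/2 with hpdef
  have hd2 : (2:ℝ) ≤ (d:ℝ) := by exact_mod_cast hd
  have hp0 : (0:ℝ) < p := by rw [hpdef]; linarith
  set θ : ℝ := ubv (d-1) with hθdef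
  have hθ : 0 < θ := by rw [hθdef]; exact ubv_pos _
  have hi0 : (0:ℝ) ≤ (i:ℝ) := Nat.cast_nonneg i
  have hi4 : (0:ℝ) < 4 + (i:ℝ) := by linarith
  have hδ0 : 0 < δ := by rw [hδ]; positivity
  have hδ1 : δ < 1 := by
    rw [hδ, div_lt_one hi4]; linarith
  have h2δ : 2*δ ≤ ε := by
    rw [hδ, ← mul_div_assoc, div_le_iff₀ hi4]
    have := mul_nonneg hε0.le hi0
    linarith
  set c : ℝ := θ * (3/4)^p with hcdef
  have hc : 0 < c := mul_pos hθ (Real.rpow_pos_of_pos (by norm_num) p)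
  have hfac : (0:ℝ) < (Nat.factorial i : ℝ) := by exact_mod_cast i.factorial_pos
  have hgc : Continuous (fun y : ℝ => (1 - y^2) ^ p) := contg p hp0.le
  have hhc : Continuous (hSlab d) := by
    rw [continuous_iff_continuousAt]
    exact fun a => (hasDerivAt_hSlab d hd a).continuousAt
  have hFc : Continuous (fun w : ℝ => Real.exp (-w) * w^i) :=
    (Real.continuous_exp.comp continuous_neg).mul (continuous_pow i)
  -- eventual facts
  have EA : Filter.Tendsto (fun s:ℝ => s ^ (δ-1)) Filter.atTop (nhds 0) := by
    have h := tendsto_rpow_neg_atTop (y := 1-δ) (by linarith)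
    simpa [neg_sub] using h
  have E2 : ∀ᶠ s : ℝ in Filter.atTop, s ^ (δ-1) < 1/2 :=
    EA.eventually_lt_const (by norm_num)
  have E3 : ∀ᶠ s : ℝ in Filter.atTop, (p+1) * (s ^ (δ-1) * s ^ (δ-1)) < 1/2 := by
    have h : Filter.Tendsto (fun s:ℝ => (p+1) * (s ^ (δ-1) * s ^ (δ-1)))
        Filter.atTop (nhds ((p+1) * (0*0))) := ((EA.mul EA).const_mul _)
    rw [mul_zero, mul_zero] at h
    exact h.eventually_lt_const (by norm_num)
  have E4 : ∀ᶠ s : ℝ in Filter.atTop, (s^δ) ^ ((2:ℝ)/δ) * Real.exp (-(c/2) * s^δ) < 1 := by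
    have h1 := tendsto_rpow_mul_exp_neg_mul_atTop_nhds_zero ((2:ℝ)/δ) (c/2) (by positivity)
    have h2 := tendsto_rpow_atTop hδ0
    exact (h1.comp h2).eventually_lt_const (by norm_num)
  have key : ∀ᶠ s : ℝ in Filter.atTop,
      |θ * (∫ a in (0:ℝ)..(s ^ (δ - 1)), Real.exp (-(s * hSlab d a)) * (hSlab d a)^i)
        - (Nat.factorial i : ℝ) / s^(i+1)|
      ≤ (2*(p+1)*(Nat.factorial i : ℝ) + 2^(i+1)*(Nat.factorial i : ℝ)) * s ^ (ε - (i:ℝ) - 3) := by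
    filter_upwards [Filter.eventually_ge_atTop (1:ℝ), E2, E3, E4] with s hs1 hA2 hA3 hA4
    have hs0 : (0:ℝ) < s := lt_of_lt_of_le one_pos hs1
    set A : ℝ := s ^ (δ-1) with hAdef
    have hA0 : 0 ≤ A := Real.rpow_nonneg hs0.le _
    have hA12 : A ≤ 1/2 := hA2.le
    -- pointwise facts on [0, A]
    have hh_nonneg : ∀ a ∈ Icc (0:ℝ) A, 0 ≤ hSlab d a := by
      intro a ha
      simp only [hSlab]
      apply mul_nonneg (ubv_pos _).le
      apply intervalIntegral.integral_nonneg ha.1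
      intro y hy
      apply Real.rpow_nonneg
      have hy2 : y ≤ 1/2 := le_trans hy.2 (le_trans ha.2 hA12)
      have hysq := pow_le_pow_left₀ hy.1 hy2 2
      norm_num at hysq
      linarith
    have hφ_nonneg : ∀ a ∈ Icc (0:ℝ) A, 0 ≤ Real.exp (-(s * hSlab d a)) * (hSlab d a)^i := by
      intro a ha
      have := hh_nonneg a ha
      positivity
    have hg_le_one : ∀ a ∈ Icc (0:ℝ) A, (1 - a^2)^p ≤ 1 := by
      intro a ha
      have ha2 : a ≤ 1/2 := le_trans ha.2 hA12
      have hasq := pow_le_pow_left₀ ha.1 ha2 2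
      norm_num at hasq
      apply Real.rpow_le_one (by linarith) (by have := sq_nonneg a; simp [sq] at this ⊢; nlinarith) hp0.le
    have hg_lb : ∀ a ∈ Icc (0:ℝ) A, 1 - (1 - a^2)^p ≤ (p+1) * A^2 := by
      intro a ha
      have h1 : a^2 ∈ Icc (0:ℝ) (1/2) := by
        constructor
        · positivity
        · have ha2 : a ≤ 1/2 := le_trans ha.2 hA12
          have hasq := pow_le_pow_left₀ ha.1 ha2 2
          norm_num at hasq
          linarith
      have h2 := one_sub_rpow_le p (a^2) hp0.le h1
      have h3 : a^2 ≤ A^2 := pow_le_pow_left₀ ha.1 ha.2 2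
      have h4 := mul_le_mul_of_nonneg_left h3 (show (0:ℝ) ≤ p+1 by linarith)
      linarith
    -- integrability
    have int_φ : IntervalIntegrable (fun a => Real.exp (-(s * hSlab d a)) * (hSlab d a)^i)
        volume 0 A := (((continuous_const.mul hhc).neg.rexp).mul (hhc.pow i)).intervalIntegrable _ _
    have int_gφ : IntervalIntegrable
        (fun a => θ * ((1 - a^2)^p * (Real.exp (-(s * hSlab d a)) * (hSlab d a)^i)))
        volume 0 A := by
      apply Continuous.intervalIntegrable
      exact continuous_const.mul (hgc.mul (((continuous_const.mul hhc).neg.rexp).mul (hhc.pow i)))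
    set G : ℝ := ∫ w in (0:ℝ)..(s * hSlab d A), Real.exp (-w) * w^i with hGdef
    set J : ℝ := ∫ a in (0:ℝ)..A,
        θ * ((1 - a^2)^p * (Real.exp (-(s * hSlab d a)) * (hSlab d a)^i)) with hJdef
    set I : ℝ := ∫ a in (0:ℝ)..A, Real.exp (-(s * hSlab d a)) * (hSlab d a)^i with hIdef
    have hJG : s^(i+1) * J = G := by
      have h1 := intervalIntegral.integral_comp_smul_deriv (a := (0:ℝ)) (b := A)
        (f := fun a => s * hSlab d a) (f' := fun a => s * (θ * (1 - a^2)^p))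
        (g := fun w => Real.exp (-w) * w^i)
        (fun x _ => by
          have h2 := (hasDerivAt_hSlab d hd x).const_mul s
          rw [hθdef, hpdef]
          exact h2)
        ((continuous_const.mul (continuous_const.mul hgc)).continuousOn)
        hFc
      simp only [hSlab_zero, mul_zero] at h1
      rw [hGdef, ← h1, hJdef, ← intervalIntegral.integral_const_mul]
      apply intervalIntegral.integral_congr
      intro a _
      simp only [smul_eq_mul, Function.comp_apply, mul_pow]
      ring
    have hT0 : 0 ≤ s * hSlab d A :=
      mul_nonneg hs0.le (hh_nonneg A ⟨hA0, le_refl A⟩)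
    obtain ⟨hG1, hG2, hG3⟩ := gamma_trunc i (s * hSlab d A) hT0
    rw [← hGdef] at hG1 hG2 hG3
    have hspow : (0:ℝ) < s^(i+1) := by positivity
    have hθI : θ * I = ∫ a in (0:ℝ)..A,
        θ * (Real.exp (-(s * hSlab d a)) * (hSlab d a)^i) := by
      rw [hIdef, ← intervalIntegral.integral_const_mul]
    have hL1 : J ≤ θ * I := by
      rw [hθI, hJdef]
      apply intervalIntegral.integral_mono_on hA0 int_gφ (int_φ.const_mul θ)
      intro a ha
      have h1 := hφ_nonneg a ha
      have h2 := hg_le_one a ha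
      have h3 : (1 - a^2)^p * (Real.exp (-(s * hSlab d a)) * (hSlab d a)^i)
          ≤ Real.exp (-(s * hSlab d a)) * (hSlab d a)^i := mul_le_of_le_one_left h1 h2
      exact mul_le_mul_of_nonneg_left h3 hθ.le
    have hL2 : θ * I ≤ J + ((p+1) * A^2) * (θ * I) := by
      have e2 : ∫ a in (0:ℝ)..A,
          ((p+1) * A^2) * (θ * (Real.exp (-(s * hSlab d a)) * (hSlab d a)^i))
          = ((p+1) * A^2) * (θ * I) := by
        rw [intervalIntegral.integral_const_mul, ← hθI]
      have heq : (∫ a in (0:ℝ)..A,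
            (θ * ((1 - a^2)^p * (Real.exp (-(s * hSlab d a)) * (hSlab d a)^i))
              + ((p+1) * A^2) * (θ * (Real.exp (-(s * hSlab d a)) * (hSlab d a)^i))))
          = J + ((p+1) * A^2) * (θ * I) := by
        rw [intervalIntegral.integral_add int_gφ ((int_φ.const_mul θ).const_mul _), e2, ← hJdef]
      rw [← heq, hθI]
      apply intervalIntegral.integral_mono_on hA0 (int_φ.const_mul θ)
        (int_gφ.add ((int_φ.const_mul θ).const_mul _))
      intro a ha
      have h1 := hφ_nonneg a ha
      have h2 := hg_lb a ha
      have h3 : (1 - (1 - a^2)^p) * (Real.exp (-(s * hSlab d a)) * (hSlab d a)^i)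
          ≤ ((p+1) * A^2) * (Real.exp (-(s * hSlab d a)) * (hSlab d a)^i) :=
        mul_le_mul_of_nonneg_right h2 h1
      have h4 := mul_le_mul_of_nonneg_left h3 hθ.le
      linarith [h4]
    have hA3' : (p+1) * A^2 ≤ 1/2 := by
      have hsq : A^2 = A * A := sq A
      rw [hsq]; exact hA3.le
    have hJval : J = G / s^(i+1) := by
      rw [eq_div_iff hspow.ne']
      linarith [hJG]
    have hJ0 : 0 ≤ J := by
      rw [hJval]
      exact div_nonneg hG3 hspow.le
    have hθI0 : 0 ≤ θ * I := le_trans hJ0 hL1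
    have hI2J : θ * I ≤ 2 * J := by
      have h6 := mul_le_mul_of_nonneg_right hA3' hθI0
      linarith
    -- rpow estimates
    have hie : (s:ℝ)^(i+1) = s ^ (((i:ℝ))+1) := by
      rw [← Real.rpow_natCast s (i+1)]
      congr 1
      push_cast; ring
    have hrp1 : A^2 / s^(i+1) ≤ s ^ (ε - (i:ℝ) - 3) := by
      have e1 : A^2 = s ^ ((δ-1)*2) := by
        rw [hAdef, ← Real.rpow_natCast (s ^ (δ-1)) 2, ← Real.rpow_mul hs0.le]
        norm_num
      rw [e1, hie, ← Real.rpow_sub hs0]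
      apply Real.rpow_le_rpow_of_exponent_le hs1
      linarith
    have hrp2 : Real.exp (-(1/2)*(s * hSlab d A)) / s^(i+1) ≤ s ^ (ε - (i:ℝ) - 3) := by
      -- lower bound for hSlab d A
      have hlbint : A * (3/4:ℝ)^p ≤ ∫ y in (0:ℝ)..A, (1-y^2)^p := by
        have hmono := intervalIntegral.integral_mono_on (a := (0:ℝ)) (b := A)
          (f := fun _ : ℝ => ((3/4:ℝ))^p) (g := fun y : ℝ => (1-y^2)^p) (μ := volume)
          hA0 intervalIntegrable_const (hgc.intervalIntegrable _ _)
          (fun y hy => Real.rpow_le_rpow (by norm_num)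
            (by
              have hy2 : y ≤ 1/2 := le_trans hy.2 hA12
              have hysq := pow_le_pow_left₀ hy.1 hy2 2
              norm_num at hysq
              linarith) hp0.le)
        rwa [intervalIntegral.integral_const, sub_zero, smul_eq_mul] at hmono
      have hTlb : c * s^δ ≤ s * hSlab d A := by
        have hsA : s * A = s ^ δ := by
          rw [hAdef]
          nth_rewrite 1 [← Real.rpow_one s]
          rw [← Real.rpow_add hs0]
          ring_nf
        have hslab_eq : hSlab d A = θ * ∫ y in (0:ℝ)..A, (1-y^2)^p := by
          simp only [hSlab, hθdef, hpdef]
        have h5 := mul_le_mul_of_nonneg_left hlbint (show (0:ℝ) ≤ s * θ by positivity)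
        calc c * s^δ = s * θ * (A * (3/4:ℝ)^p) := by rw [← hsA, hcdef]; ring
          _ ≤ s * θ * ∫ y in (0:ℝ)..A, (1-y^2)^p := h5
          _ = s * hSlab d A := by rw [hslab_eq]; ring
      have hexp1 : Real.exp (-(1/2)*(s * hSlab d A)) ≤ Real.exp (-(c/2) * s^δ) := by
        apply Real.exp_le_exp.mpr
        linarith
      have e3 : (s^δ) ^ ((2:ℝ)/δ) = s^(2:ℝ) := by
        rw [← Real.rpow_mul hs0.le]
        congr 1
        field_simp
      rw [e3] at hA4
      have hs2 : (0:ℝ) < s^(2:ℝ) := Real.rpow_pos_of_pos hs0 _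
      have hexp2 : Real.exp (-(c/2) * s^δ) ≤ s ^ (-(2:ℝ)) := by
        rw [Real.rpow_neg hs0.le, ← one_div]
        rw [le_div_iff₀ hs2]
        linarith [hA4]
      have hexp3 : Real.exp (-(1/2)*(s * hSlab d A)) ≤ s ^ (-(2:ℝ)) :=
        le_trans hexp1 hexp2
      calc Real.exp (-(1/2)*(s * hSlab d A)) / s^(i+1)
          ≤ s ^ (-(2:ℝ)) / s^(i+1) := by
            apply (div_le_div_iff_of_pos_right hspow).mpr hexp3
        _ = s ^ (-(2:ℝ) - ((i:ℝ)+1)) := by rw [hie, ← Real.rpow_sub hs0]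
        _ ≤ s ^ (ε - (i:ℝ) - 3) := by
            apply Real.rpow_le_rpow_of_exponent_le hs1
            linarith
    -- final assembly
    have hup : θ * I - (Nat.factorial i : ℝ) / s^(i+1)
        ≤ 2*(p+1)*(Nat.factorial i : ℝ) * (A^2 / s^(i+1)) := by
      have h1 : θ * I - J ≤ ((p+1) * A^2) * (2 * J) := by
        have hq0 : (0:ℝ) ≤ (p+1) * A^2 := by positivity
        have h6 := mul_le_mul_of_nonneg_left hI2J hq0
        linarith
      have h2 : J ≤ (Nat.factorial i : ℝ) / s^(i+1) := by
        rw [hJval]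
        exact (div_le_div_iff_of_pos_right hspow).mpr hG1
      have h3 : ((p+1) * A^2) * (2 * J)
          ≤ ((p+1) * A^2) * (2 * ((Nat.factorial i : ℝ) / s^(i+1))) := by
        apply mul_le_mul_of_nonneg_left (by linarith) (by positivity)
      calc θ * I - (Nat.factorial i : ℝ) / s^(i+1) ≤ θ * I - J := by linarith
        _ ≤ ((p+1) * A^2) * (2 * ((Nat.factorial i : ℝ) / s^(i+1))) := by linarith
        _ = 2*(p+1)*(Nat.factorial i : ℝ) * (A^2 / s^(i+1)) := by ring
    have hlo : -(2^(i+1)*(Nat.factorial i : ℝ) * (Real.exp (-(1/2)*(s * hSlab d A)) / s^(i+1)))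
        ≤ θ * I - (Nat.factorial i : ℝ) / s^(i+1) := by
      have h1 := (div_le_div_iff_of_pos_right (c := s^(i+1)) hspow).mpr hG2
      have h2 : ((Nat.factorial i : ℝ) - G)/s^(i+1) = (Nat.factorial i : ℝ)/s^(i+1) - J := by
        rw [hJval]; ring
      have h3 : (2^(i+1) * (Nat.factorial i : ℝ) * Real.exp (-(1/2)*(s * hSlab d A)))/s^(i+1)
          = 2^(i+1)*(Nat.factorial i : ℝ) * (Real.exp (-(1/2)*(s * hSlab d A)) / s^(i+1)) := by
        ring
      rw [h2, h3] at h1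
      linarith
    rw [abs_le]
    constructor
    · have h4 := mul_le_mul_of_nonneg_left hrp2
        (show (0:ℝ) ≤ 2^(i+1)*(Nat.factorial i : ℝ) by positivity)
      have h5 : (0:ℝ) ≤ 2*(p+1)*(Nat.factorial i : ℝ) * s ^ (ε - (i:ℝ) - 3) := by
        have := Real.rpow_nonneg hs0.le (ε - (i:ℝ) - 3)
        positivity
      linarith
    · have h4 := mul_le_mul_of_nonneg_left hrp1
        (show (0:ℝ) ≤ 2*(p+1)*(Nat.factorial i : ℝ) by positivity)
      have h5 : (0:ℝ) ≤ 2^(i+1)*(Nat.factorial i : ℝ) * s ^ (ε - (i:ℝ) - 3) := by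
        have := Real.rpow_nonneg hs0.le (ε - (i:ℝ) - 3)
        positivity
      linarith
  obtain ⟨s₀, hs₀⟩ := Filter.eventually_atTop.mp key
  exact ⟨2*(p+1)*(Nat.factorial i : ℝ) + 2^(i+1)*(Nat.factorial i : ℝ), s₀, hs₀⟩
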